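/- Under the two-time-scale structure, assume ρ, r : [0,T] × {1,…,m} → ℝ are bounded measurable, and for each ε > 0 let P^ε be the unique solution of the P-system associated with (ρ, r, Q^ε). Suppose that along some sequence ε_n → 0 the functions P^{ε_n} converge uniformly on [0,T] to a continuous function P^0 : [0,T] × {1,…,m} → ℝ. Then Q̃ P^0(t,·) = 0 for every t ∈ [0,T]; consequently, for each k = 1,…,l, the value P^0(t, s_{kj}) does not depend on j = 1,…,m_k. -/

import Mathlib

open MeasureTheory Filter
open scoped BigOperators Topology

/-- `Q` is the generator matrix of a continuous-time Markov chain: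
off-diagonal entries are nonnegative and each row sums to zero. -/
def IsGenerator {S : Type*} [Fintype S] (Q : Matrix S S ℝ) : Prop :=
  (∀ i j, i ≠ j → 0 ≤ Q i j) ∧ ∀ i, ∑ j, Q i j = 0

/-- `f : [0,T] × S → ℝ` is bounded and measurable (in time, for each state). -/
def BddMeasOn {S : Type*} [Fintype S] (T : ℝ) (f : ℝ → S → ℝ) : Prop :=
  (∀ i, Measurable fun t => f t i) ∧
    ∃ C : ℝ, ∀ t ∈ Set.Icc (0:ℝ) T, ∀ i, |f t i| ≤ C

/-- `P` is a solution of the P-system associated with `(ρ, r, Q)` on `[0,T]`: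
`P` is continuous on `[0,T]` and
`P(t,i) = 1 - ∫_t^T [P(s,i)(ρ(s,i) - 2 r(s,i)) - Σ_j q_{ij} P(s,j)] ds`. -/
def IsPSol {S : Type*} [Fintype S] (T : ℝ) (Q : Matrix S S ℝ)
    (ρ r : ℝ → S → ℝ) (P : ℝ → S → ℝ) : Prop :=
  (∀ i, ContinuousOn (fun t => P t i) (Set.Icc 0 T)) ∧
    ∀ t ∈ Set.Icc (0:ℝ) T, ∀ i,
      P t i = 1 - ∫ s in t..T, (P s i * (ρ s i - 2 * r s i) - ∑ j, Q i j * P s j)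

/-- `H` is a solution of the H-system associated with `(r, Q, P)` on `[0,T]`:
`H` is continuous on `[0,T]` and
`H(t,i) = 1 - ∫_t^T [H(s,i) r(s,i) - (1/P(s,i)) Σ_j q_{ij} P(s,j) H(s,j)
  + (H(s,i)/P(s,i)) Σ_j q_{ij} P(s,j)] ds`. -/
def IsHSol {S : Type*} [Fintype S] (T : ℝ) (Q : Matrix S S ℝ)
    (r : ℝ → S → ℝ) (P : ℝ → S → ℝ) (H : ℝ → S → ℝ) : Prop :=
  (∀ i, ContinuousOn (fun t => H t i) (Set.Icc 0 T)) ∧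
    ∀ t ∈ Set.Icc (0:ℝ) T, ∀ i,
      H t i = 1 - ∫ s in t..T,
        (H s i * r s i - (1 / P s i) * ∑ j, Q i j * P s j * H s j
          + (H s i / P s i) * ∑ j, Q i j * P s j)

/-- The kernel of `Q`, acting on column vectors, is spanned by the all-ones vector. -/
def KerSpannedByOnes {S : Type*} [Fintype S] (Q : Matrix S S ℝ) : Prop :=
  ∀ v : S → ℝ, Q.mulVec v = 0 → ∃ c : ℝ, ∀ j, v j = c


lemma zero_of_integral_right_eq_zero {T : ℝ} (hT : 0 < T) {f : ℝ → ℝ}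
    (hf : ContinuousOn f (Set.Icc 0 T))
    (h : ∀ t ∈ Set.Icc (0:ℝ) T, (∫ s in t..T, f s) = 0) :
    ∀ t ∈ Set.Icc (0:ℝ) T, f t = 0 := by
  have hfuIcc : ContinuousOn f (Set.uIcc 0 T) := by
    rwa [Set.uIcc_of_le hT.le]
  have hfi : IntervalIntegrable f volume 0 T := hfuIcc.intervalIntegrable
  have hψ : ∀ u ∈ Set.Icc (0:ℝ) T, (∫ s in (0:ℝ)..u, f s) = 0 := by
    intro u hu
    have h1 : IntervalIntegrable f volume 0 u := by
      apply hfi.mono_set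
      rw [Set.uIcc_of_le hT.le, Set.uIcc_of_le hu.1]
      exact Set.Icc_subset_Icc le_rfl hu.2
    have h2 : IntervalIntegrable f volume u T := by
      apply hfi.mono_set
      rw [Set.uIcc_of_le hT.le, Set.uIcc_of_le hu.2]
      exact Set.Icc_subset_Icc hu.1 le_rfl
    have h3 := intervalIntegral.integral_add_adjacent_intervals h1 h2
    have h4 := h u hu
    have h5 := h 0 ⟨le_rfl, hT.le⟩
    linarith
  intro t ht
  haveI : Fact (t ∈ Set.Icc (0:ℝ) T) := ⟨ht⟩
  have hint : IntervalIntegrable f volume 0 t := by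
    apply hfi.mono_set
    rw [Set.uIcc_of_le hT.le, Set.uIcc_of_le ht.1]
    exact Set.Icc_subset_Icc le_rfl ht.2
  have hmeas : StronglyMeasurableAtFilter f (nhdsWithin t (Set.Icc 0 T)) volume :=
    ⟨Set.Icc 0 T, self_mem_nhdsWithin, hf.aestronglyMeasurable measurableSet_Icc⟩
  have hd : HasDerivWithinAt (fun u => ∫ s in (0:ℝ)..u, f s) (f t) (Set.Icc 0 T) t :=
    intervalIntegral.integral_hasDerivWithinAt_right hint hmeas (hf t ht)
  have hd0 : HasDerivWithinAt (fun u => ∫ s in (0:ℝ)..u, f s) 0 (Set.Icc 0 T) t := by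
    have hc : HasDerivWithinAt (fun _ : ℝ => (0:ℝ)) 0 (Set.Icc 0 T) t :=
      (hasDerivWithinAt_const t _ (0:ℝ))
    exact hc.congr (fun u hu => hψ u hu) (hψ t ht)
  have hu := (uniqueDiffOn_Icc hT) t ht
  have e1 := hd.derivWithin hu
  have e2 := hd0.derivWithin hu
  rw [e1] at e2
  exact e2

set_option maxHeartbeats 1000000 in
/-- if along a sequence `ε_n → 0` the solutions `P^{ε_n}` of the
P-systems associated with `(ρ, r, Q^{ε_n})` converge uniformly on `[0,T]` to a
continuous `P^0`, then `Q̃ P^0(t,·) = 0` for every `t ∈ [0,T]`; consequently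
`P^0(t, s_{kj})` does not depend on `j` within each block `k`. -/

theorem two_scale_limit_block_constant
    (l : ℕ) (hl : 1 ≤ l) (mk : Fin l → ℕ) (hmk : ∀ k, 1 ≤ mk k)
    (T : ℝ) (hT : 0 < T)
    (Qt Qh : Matrix (Σ k : Fin l, Fin (mk k)) (Σ k : Fin l, Fin (mk k)) ℝ)
    (hQtblock : ∀ p q : Σ k : Fin l, Fin (mk k), p.1 ≠ q.1 → Qt p q = 0)
    (hQtgen : ∀ k : Fin l,
      IsGenerator (Matrix.of fun i j : Fin (mk k) => Qt ⟨k, i⟩ ⟨k, j⟩))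
    (hQtker : ∀ k : Fin l,
      KerSpannedByOnes (Matrix.of fun i j : Fin (mk k) => Qt ⟨k, i⟩ ⟨k, j⟩))
    (hQh : IsGenerator Qh)
    (ρ r : ℝ → (Σ k : Fin l, Fin (mk k)) → ℝ)
    (hρ : BddMeasOn T ρ) (hr : BddMeasOn T r)
    (Pe : ℝ → ℝ → (Σ k : Fin l, Fin (mk k)) → ℝ)
    (hPe : ∀ ε : ℝ, 0 < ε → IsPSol T ((1 / ε) • Qt + Qh) ρ r (Pe ε))
    (en : ℕ → ℝ) (hen_pos : ∀ n, 0 < en n) (hen : Tendsto en atTop (𝓝 0))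
    (P0 : ℝ → (Σ k : Fin l, Fin (mk k)) → ℝ)
    (hP0c : ∀ i, ContinuousOn (fun t => P0 t i) (Set.Icc 0 T))
    (hconv : ∀ i, TendstoUniformlyOn (fun n t => Pe (en n) t i)
      (fun t => P0 t i) atTop (Set.Icc 0 T)) :
    ∀ t ∈ Set.Icc (0:ℝ) T,
      Qt.mulVec (P0 t) = 0 ∧
      ∀ k : Fin l, ∀ j j' : Fin (mk k), P0 t ⟨k, j⟩ = P0 t ⟨k, j'⟩ := by
  obtain ⟨hρm, Cρ, hCρ⟩ := hρ
  obtain ⟨hrm, Cr, hCr⟩ := hr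
  -- a state to witness nonnegativity of the bounds
  have hSne : Nonempty (Σ k : Fin l, Fin (mk k)) :=
    ⟨⟨⟨0, hl⟩, ⟨0, hmk _⟩⟩⟩
  obtain ⟨i₀⟩ := hSne
  have h0mem : (0:ℝ) ∈ Set.Icc (0:ℝ) T := ⟨le_rfl, hT.le⟩
  have hCρ0 : 0 ≤ Cρ := (abs_nonneg _).trans (hCρ 0 h0mem i₀)
  have hCr0 : 0 ≤ Cr := (abs_nonneg _).trans (hCr 0 h0mem i₀)
  -- bound for P0
  have hbex : ∀ j : (Σ k : Fin l, Fin (mk k)), ∃ b : ℝ,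
      ∀ s ∈ Set.Icc (0:ℝ) T, |P0 s j| ≤ b := by
    intro j
    obtain ⟨b, hb⟩ := isCompact_Icc.exists_bound_of_continuousOn (hP0c j)
    exact ⟨b, fun s hs => by simpa [Real.norm_eq_abs] using hb s hs⟩
  choose bb hbb using hbex
  set M0 : ℝ := ∑ j, |bb j| with hM0def
  have hM0nn : 0 ≤ M0 := Finset.sum_nonneg fun _ _ => abs_nonneg _
  have hP0bd : ∀ s ∈ Set.Icc (0:ℝ) T, ∀ j, |P0 s j| ≤ M0 := by
    intro s hs j
    refine (hbb j s hs).trans ((le_abs_self _).trans ?_)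
    exact Finset.single_le_sum (f := fun j => |bb j|) (fun _ _ => abs_nonneg _) (Finset.mem_univ j)
  -- eventual uniform bound for Pe (en n)
  have hUB : ∀ᶠ n in atTop, ∀ s ∈ Set.Icc (0:ℝ) T, ∀ j, |Pe (en n) s j| ≤ M0 + 1 := by
    have h1 : ∀ᶠ n in atTop, ∀ j : (Σ k : Fin l, Fin (mk k)),
        ∀ s ∈ Set.Icc (0:ℝ) T, dist (P0 s j) (Pe (en n) s j) < 1 :=
      Filter.eventually_all.2 fun j => (Metric.tendstoUniformlyOn_iff.1 (hconv j)) 1 one_pos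
    filter_upwards [h1] with n hn s hs j
    have h2 := hn j s hs
    rw [Real.dist_eq] at h2
    have h3 := hP0bd s hs j
    have h4 : |Pe (en n) s j| - |P0 s j| ≤ |Pe (en n) s j - P0 s j| :=
      abs_sub_abs_le_abs_sub _ _
    rw [abs_sub_comm] at h4
    linarith
  -- key claim
  have key : ∀ i, ∀ t ∈ Set.Icc (0:ℝ) T, (∑ j, Qt i j * P0 t j) = 0 := by
    intro i
    have hCfc : ContinuousOn (fun s => ∑ j, Qt i j * P0 s j) (Set.Icc 0 T) := by
      apply continuousOn_finset_sum
      intro j _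
      exact continuousOn_const.mul (hP0c j)
    refine zero_of_integral_right_eq_zero hT hCfc ?_
    intro t ht
    have hsub : Set.Ioc t T ⊆ Set.Icc (0:ℝ) T := fun s hs => ⟨ht.1.trans hs.1.le, hs.2⟩
    have hPnm : ∀ n (j : (Σ k : Fin l, Fin (mk k))),
        AEStronglyMeasurable (fun s => Pe (en n) s j) (volume.restrict (Set.Ioc t T)) :=
      fun n j => ((((hPe (en n) (hen_pos n)).1 j).aestronglyMeasurable
        measurableSet_Icc)).mono_set hsub
    set D : ℝ := ∑ j, |Qt i j| with hDdef
    have hD0 : 0 ≤ D := Finset.sum_nonneg fun _ _ => abs_nonneg _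
    set E : ℝ := ∑ j, |Qh i j| with hEdef
    have hE0 : 0 ≤ E := Finset.sum_nonneg fun _ _ => abs_nonneg _
    set K : ℝ := (M0 + 1) * (Cρ + 2 * Cr) + E * (M0 + 1) with hKdef
    have hK0 : 0 ≤ K := by positivity
    -- eventual interval integrability of Cn
    have hCniE : ∀ᶠ n in atTop,
        IntervalIntegrable (fun s => ∑ j, Qt i j * Pe (en n) s j) volume t T := by
      filter_upwards [hUB] with n hn
      rw [intervalIntegrable_iff_integrableOn_Ioc_of_le ht.2]
      refine ⟨Finset.aestronglyMeasurable_fun_sum _ fun j _ =>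
        aestronglyMeasurable_const.mul (hPnm n j), ?_⟩
      refine HasFiniteIntegral.restrict_of_bounded (C := D * (M0 + 1)) measure_Ioc_lt_top ?_
      refine (ae_restrict_iff' measurableSet_Ioc).2 (Filter.Eventually.of_forall fun s hs => ?_)
      calc ‖∑ j, Qt i j * Pe (en n) s j‖ ≤ ∑ j, |Qt i j * Pe (en n) s j| :=
            Finset.abs_sum_le_sum_abs _ _
        _ ≤ ∑ j, |Qt i j| * (M0 + 1) := by
            refine Finset.sum_le_sum fun j _ => ?_
            rw [abs_mul]
            exact mul_le_mul_of_nonneg_left (hn s (hsub hs) j) (abs_nonneg _)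
        _ = D * (M0 + 1) := by rw [← Finset.sum_mul]
    -- eventual interval integrability of Bn with bound K
    have hBbdE : ∀ᶠ n in atTop, ∀ s ∈ Set.Ioc t T,
        ‖Pe (en n) s i * (ρ s i - 2 * r s i) - ∑ j, Qh i j * Pe (en n) s j‖ ≤ K := by
      filter_upwards [hUB] with n hn s hs
      have hPi := hn s (hsub hs) i
      have hρs := hCρ s (hsub hs) i
      have hrs := hCr s (hsub hs) i
      have hsum : |∑ j, Qh i j * Pe (en n) s j| ≤ E * (M0 + 1) := by
        calc |∑ j, Qh i j * Pe (en n) s j| ≤ ∑ j, |Qh i j * Pe (en n) s j| :=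
              Finset.abs_sum_le_sum_abs _ _
          _ ≤ ∑ j, |Qh i j| * (M0 + 1) := by
              refine Finset.sum_le_sum fun j _ => ?_
              rw [abs_mul]
              exact mul_le_mul_of_nonneg_left (hn s (hsub hs) j) (abs_nonneg _)
          _ = E * (M0 + 1) := by rw [← Finset.sum_mul]
      have h1 : |Pe (en n) s i * (ρ s i - 2 * r s i)| ≤ (M0 + 1) * (Cρ + 2 * Cr) := by
        rw [abs_mul]
        have h2 : |ρ s i - 2 * r s i| ≤ Cρ + 2 * Cr := by
          have := abs_sub (ρ s i) (2 * r s i)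
          have h3 : |2 * r s i| = 2 * |r s i| := by rw [abs_mul]; norm_num
          calc |ρ s i - 2 * r s i| ≤ |ρ s i| + |2 * r s i| := abs_sub _ _
            _ ≤ Cρ + 2 * Cr := by rw [h3]; linarith
        exact mul_le_mul hPi h2 (abs_nonneg _) (by linarith)
      calc ‖Pe (en n) s i * (ρ s i - 2 * r s i) - ∑ j, Qh i j * Pe (en n) s j‖
          ≤ |Pe (en n) s i * (ρ s i - 2 * r s i)| + |∑ j, Qh i j * Pe (en n) s j| :=
            abs_sub _ _
        _ ≤ K := by rw [hKdef]; linarith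
    have hBniE : ∀ᶠ n in atTop,
        IntervalIntegrable (fun s => Pe (en n) s i * (ρ s i - 2 * r s i)
          - ∑ j, Qh i j * Pe (en n) s j) volume t T := by
      filter_upwards [hBbdE] with n hn
      rw [intervalIntegrable_iff_integrableOn_Ioc_of_le ht.2]
      have hm : AEStronglyMeasurable
          (fun s => Pe (en n) s i * (ρ s i - 2 * r s i) - ∑ j, Qh i j * Pe (en n) s j)
          (volume.restrict (Set.Ioc t T)) := by
        refine AEStronglyMeasurable.sub ?_ ?_
        · exact (hPnm n i).mul
            (((hρm i).sub ((measurable_const.mul (hrm i)))).aestronglyMeasurable)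
        · exact Finset.aestronglyMeasurable_fun_sum _ fun j _ =>
            aestronglyMeasurable_const.mul (hPnm n j)
      refine ⟨hm, HasFiniteIntegral.restrict_of_bounded (C := K) measure_Ioc_lt_top ?_⟩
      exact (ae_restrict_iff' measurableSet_Ioc).2 (Filter.Eventually.of_forall hn)
    -- the rearranged equation
    have hEqX : ∀ᶠ n in atTop,
        (∫ s in t..T, ∑ j, Qt i j * Pe (en n) s j)
          = en n * ((Pe (en n) t i - 1) + ∫ s in t..T,
              (Pe (en n) s i * (ρ s i - 2 * r s i) - ∑ j, Qh i j * Pe (en n) s j))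
        ∧ |(Pe (en n) t i - 1) + ∫ s in t..T,
              (Pe (en n) s i * (ρ s i - 2 * r s i) - ∑ j, Qh i j * Pe (en n) s j)|
            ≤ (M0 + 1) + 1 + K * T := by
      filter_upwards [hUB, hCniE, hBniE, hBbdE] with n hn hCni hBni hBbd
      have hε : en n ≠ 0 := (hen_pos n).ne'
      have heq := (hPe (en n) (hen_pos n)).2 t ht i
      have hfun : ∀ s : ℝ, Pe (en n) s i * (ρ s i - 2 * r s i)
            - ∑ j, ((1 / en n) • Qt + Qh) i j * Pe (en n) s j
          = (Pe (en n) s i * (ρ s i - 2 * r s i) - ∑ j, Qh i j * Pe (en n) s j)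
            - (1 / en n) * ∑ j, Qt i j * Pe (en n) s j := by
        intro s
        have hsum : ∑ j, ((1 / en n) • Qt + Qh) i j * Pe (en n) s j
            = (1 / en n) * (∑ j, Qt i j * Pe (en n) s j)
              + ∑ j, Qh i j * Pe (en n) s j := by
          rw [Finset.mul_sum, ← Finset.sum_add_distrib]
          refine Finset.sum_congr rfl fun j _ => ?_
          simp only [Matrix.add_apply, Matrix.smul_apply, smul_eq_mul]
          ring
        rw [hsum]
        ring
      simp only [hfun] at heq
      rw [intervalIntegral.integral_sub hBni (hCni.const_mul _),
        intervalIntegral.integral_const_mul] at heq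
      constructor
      · have h3 : (1 / en n) * (∫ s in t..T, ∑ j, Qt i j * Pe (en n) s j)
            = Pe (en n) t i - 1 + ∫ s in t..T,
              (Pe (en n) s i * (ρ s i - 2 * r s i) - ∑ j, Qh i j * Pe (en n) s j) := by
          linarith
        calc (∫ s in t..T, ∑ j, Qt i j * Pe (en n) s j)
            = en n * ((1 / en n) * ∫ s in t..T, ∑ j, Qt i j * Pe (en n) s j) := by
              field_simp
          _ = _ := by rw [h3]
      · have hI : ‖∫ s in t..T, (Pe (en n) s i * (ρ s i - 2 * r s i)
            - ∑ j, Qh i j * Pe (en n) s j)‖ ≤ K * |T - t| := by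
          apply intervalIntegral.norm_integral_le_of_norm_le_const
          intro x hx
          rw [Set.uIoc_of_le ht.2] at hx
          exact hBbd x hx
        have hTt : |T - t| ≤ T := by
          rw [abs_of_nonneg (by linarith [ht.2])]
          linarith [ht.1]
        have hPt := hn t ht i
        have habs : |(Pe (en n) t i - 1) + ∫ s in t..T,
              (Pe (en n) s i * (ρ s i - 2 * r s i) - ∑ j, Qh i j * Pe (en n) s j)|
            ≤ |Pe (en n) t i - 1| + |∫ s in t..T,
              (Pe (en n) s i * (ρ s i - 2 * r s i) - ∑ j, Qh i j * Pe (en n) s j)| :=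
          abs_add_le _ _
        have h1 : |Pe (en n) t i - 1| ≤ |Pe (en n) t i| + 1 := by
          calc |Pe (en n) t i - 1| ≤ |Pe (en n) t i| + |(1:ℝ)| := abs_sub _ _
            _ = |Pe (en n) t i| + 1 := by norm_num
        have h2 : K * |T - t| ≤ K * T := mul_le_mul_of_nonneg_left hTt hK0
        rw [Real.norm_eq_abs] at hI
        linarith
    -- limit 1 : the integrals tend to 0
    have hlim1 : Tendsto (fun n => ∫ s in t..T, ∑ j, Qt i j * Pe (en n) s j)
        atTop (𝓝 0) := by
      have hbdd : Filter.IsBoundedUnder (· ≤ ·) atTop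
          ((‖·‖) ∘ fun n => (Pe (en n) t i - 1) + ∫ s in t..T,
            (Pe (en n) s i * (ρ s i - 2 * r s i) - ∑ j, Qh i j * Pe (en n) s j)) := by
        apply Filter.isBoundedUnder_of_eventually_le (a := (M0 + 1) + 1 + K * T)
        filter_upwards [hEqX] with n h
        simpa [Real.norm_eq_abs] using h.2
      have h0 := hen.zero_mul_isBoundedUnder_le hbdd
      apply h0.congr'
      filter_upwards [hEqX] with n h
      exact h.1.symm
    -- limit 2 : the integrals tend to ∫ Cf
    have hlim2 : Tendsto (fun n => ∫ s in t..T, ∑ j, Qt i j * Pe (en n) s j)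
        atTop (𝓝 (∫ s in t..T, ∑ j, Qt i j * P0 s j)) := by
      rw [Metric.tendsto_nhds]
      intro δ hδ
      have hden : (0:ℝ) < (D + 1) * (T + 1) := by nlinarith
      set δ' : ℝ := δ / ((D + 1) * (T + 1)) with hδ'def
      have hδ'pos : 0 < δ' := div_pos hδ hden
      have hev : ∀ᶠ n in atTop, ∀ j : (Σ k : Fin l, Fin (mk k)),
          ∀ s ∈ Set.Icc (0:ℝ) T, dist (P0 s j) (Pe (en n) s j) < δ' :=
        Filter.eventually_all.2 fun j =>
          (Metric.tendstoUniformlyOn_iff.1 (hconv j)) δ' hδ'pos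
      have hCfi : IntervalIntegrable (fun s => ∑ j, Qt i j * P0 s j) volume t T := by
        apply ContinuousOn.intervalIntegrable
        apply hCfc.mono
        rw [Set.uIcc_of_le ht.2]
        exact Set.Icc_subset_Icc ht.1 le_rfl
      filter_upwards [hev, hCniE] with n hn hCni
      have hsubint := intervalIntegral.integral_sub hCni hCfi
      have hb : ∀ x ∈ Set.uIoc t T,
          ‖(∑ j, Qt i j * Pe (en n) x j) - ∑ j, Qt i j * P0 x j‖ ≤ D * δ' := by
        intro x hx
        rw [Set.uIoc_of_le ht.2] at hx
        have hxI : x ∈ Set.Icc (0:ℝ) T := hsub hx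
        calc ‖(∑ j, Qt i j * Pe (en n) x j) - ∑ j, Qt i j * P0 x j‖
            = |∑ j, Qt i j * (Pe (en n) x j - P0 x j)| := by
              rw [Real.norm_eq_abs, ← Finset.sum_sub_distrib]
              congr 1
              exact Finset.sum_congr rfl fun j _ => by ring
          _ ≤ ∑ j, |Qt i j * (Pe (en n) x j - P0 x j)| := Finset.abs_sum_le_sum_abs _ _
          _ ≤ ∑ j, |Qt i j| * δ' := by
              refine Finset.sum_le_sum fun j _ => ?_
              rw [abs_mul]
              refine mul_le_mul_of_nonneg_left ?_ (abs_nonneg _)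
              have := hn j x hxI
              rw [Real.dist_eq, abs_sub_comm] at this
              exact this.le
          _ = D * δ' := by rw [← Finset.sum_mul]
      have hnorm : ‖∫ s in t..T, ((∑ j, Qt i j * Pe (en n) s j)
          - ∑ j, Qt i j * P0 s j)‖ ≤ D * δ' * |T - t| :=
        intervalIntegral.norm_integral_le_of_norm_le_const hb
      rw [Real.dist_eq]
      have heq2 : (∫ s in t..T, ∑ j, Qt i j * Pe (en n) s j)
          - ∫ s in t..T, ∑ j, Qt i j * P0 s j
          = ∫ s in t..T, ((∑ j, Qt i j * Pe (en n) s j) - ∑ j, Qt i j * P0 s j) :=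
        hsubint.symm
      rw [heq2]
      rw [Real.norm_eq_abs] at hnorm
      have hTt : |T - t| ≤ T := by
        rw [abs_of_nonneg (by linarith [ht.2])]
        linarith [ht.1]
      have hfin : D * δ' * |T - t| < δ := by
        have h1 : D * δ' * |T - t| ≤ D * δ' * T := by
          apply mul_le_mul_of_nonneg_left hTt
          positivity
        have h2 : δ' * ((D + 1) * (T + 1)) = δ := by
          rw [hδ'def]; field_simp
        nlinarith [hδ'pos, hD0, hT]
      linarith
    exact tendsto_nhds_unique hlim2 hlim1
  -- conclusion
  intro t ht
  have hmv : Qt.mulVec (P0 t) = 0 := by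
    funext i
    simpa [Matrix.mulVec, dotProduct] using key i t ht
  refine ⟨hmv, ?_⟩
  intro k j j'
  have hblock : (Matrix.of fun i j : Fin (mk k) => Qt ⟨k, i⟩ ⟨k, j⟩).mulVec
      (fun j => P0 t ⟨k, j⟩) = 0 := by
    funext i'
    have h1 := key ⟨k, i'⟩ t ht
    rw [← Finset.univ_sigma_univ, Finset.sum_sigma] at h1
    rw [Finset.sum_eq_single k] at h1
    · simpa [Matrix.mulVec, dotProduct] using h1
    · intro b _ hb
      refine Finset.sum_eq_zero fun j'' _ => ?_
      rw [hQtblock ⟨k, i'⟩ ⟨b, j''⟩ (by simpa using (Ne.symm hb)), zero_mul]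
    · intro h
      exact absurd (Finset.mem_univ k) h
  obtain ⟨c, hc⟩ := hQtker k _ hblock
  rw [hc j, hc j']
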